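/- For the target block diagonal affinity matrix W, the matrix D is invertible and the characteristic polynomial of D^{−1} L equals X^K · ∏_{i=1}^{K} (X − N_i/(N_i − 1))^{N_i − 1}; equivalently, the generalized eigenvalues of the pair (L, D), counted with multiplicity, consist of K zeros together with, for each block i, the value N_i/(N_i − 1) repeated N_i − 1 times. -/

import Mathlib

open Matrix Polynomial

lemma aux_det_field {F : Type*} [Field F] (s : ℕ) (x y : F) (hxy : x - y ≠ 0) :
    (Matrix.of fun i j : Fin (s+1) => if i = j then x else y).det
      = (x - y) ^ s * (x + (s : F) * y) := by
  have h1 : (Matrix.of fun i j : Fin (s+1) => if i = j then x else y)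
      = (x - y) • (1 + Matrix.replicateCol Unit (fun _ : Fin (s+1) => (x - y)⁻¹ * y)
          * Matrix.replicateRow Unit (fun _ : Fin (s+1) => (1 : F))) := by
    ext i j
    by_cases h : i = j
    · subst h
      simp [Matrix.mul_apply, Matrix.one_apply, Matrix.replicateCol_apply, Matrix.replicateRow_apply,
        Fintype.sum_unique]
      field_simp
      ring
    · simp [Matrix.mul_apply, Matrix.one_apply, h, Matrix.replicateCol_apply, Matrix.replicateRow_apply,
        Fintype.sum_unique]
      field_simp
  rw [h1, Matrix.det_smul, Matrix.det_one_add_replicateCol_mul_replicateRow, Fintype.card_fin]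
  simp only [dotProduct, Finset.sum_const, Finset.card_univ, Fintype.card_fin,
    nsmul_eq_mul, one_mul]
  have hp : (x - y) ^ (s + 1) = (x - y) ^ s * (x - y) := pow_succ _ _
  field_simp
  push_cast
  ring

lemma aux_det_poly (s : ℕ) (c e : ℝ) :
    (Matrix.of fun i j : Fin (s+1) =>
        if i = j then (X - C c : ℝ[X]) else Polynomial.C e).det
      = (X - C c - C e) ^ s * (X - C c + (s : ℝ[X]) * C e) := by
  set f := algebraMap ℝ[X] (RatFunc ℝ) with hf
  have hinj : Function.Injective f := IsFractionRing.injective ℝ[X] (RatFunc ℝ)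
  apply hinj
  have hmap : (Matrix.of fun i j : Fin (s+1) =>
      if i = j then (X - C c : ℝ[X]) else Polynomial.C e).map f
      = Matrix.of fun i j : Fin (s+1) =>
        if i = j then f (X - C c) else f (Polynomial.C e) := by
    ext i j; simp [Matrix.map_apply, apply_ite f]
  have hne : f (X - C c) - f (Polynomial.C e) ≠ 0 := by
    rw [← map_sub]
    intro h
    have : (X - C c - C e : ℝ[X]) = 0 := hinj (by simpa using h)
    have h2 : (X - C c - C e : ℝ[X]) = X - C (c + e) := by push_cast [map_add]; ring
    rw [h2] at this
    exact Polynomial.X_sub_C_ne_zero (c + e) this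
  rw [RingHom.map_det, RingHom.mapMatrix_apply, hmap,
    aux_det_field s _ _ hne]
  simp only [_root_.map_mul, map_pow, map_sub, map_add, map_natCast]

set_option maxHeartbeats 1000000 in
/-- For the target block diagonal affinity matrix `W`, the matrix `D` is
invertible and the characteristic polynomial of `D⁻¹ * L` equals
`X ^ K * ∏ i, (X - C (n i / (n i - 1))) ^ (n i - 1)`; equivalently the generalized
eigenvalues of the pair `(L, D)`, counted with multiplicity, consist of `K` zeros together
with, for each block `i`, the value `n i / (n i - 1)` repeated `n i - 1` times. -/
theorem target_generalized_eigenvalues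
    (K : ℕ) (hK : 1 ≤ K)
    (n : Fin K → ℕ) (hn : ∀ i, 2 ≤ n i)
    (w : Fin K → ℝ) (hw : ∀ i, 0 < w i)
    (N : ℕ) (hN : N = ∑ i, n i)
    (β : Fin N → Fin K)
    (hβ : ∀ m : Fin N,
      (∑ k ∈ Finset.univ.filter (fun k => k < β m), n k) ≤ m.val ∧
      m.val < (∑ k ∈ Finset.univ.filter (fun k => k < β m), n k) + n (β m))
    (W : Matrix (Fin N) (Fin N) ℝ)
    (hW : ∀ m p, W m p = if m ≠ p ∧ β m = β p then w (β m) else 0)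
    (D : Matrix (Fin N) (Fin N) ℝ)
    (hD : D = Matrix.diagonal (fun m => ∑ p, W m p))
    (L : Matrix (Fin N) (Fin N) ℝ)
    (hL : L = D - W) :
    IsUnit D ∧
    (D⁻¹ * L).charpoly =
      Polynomial.X ^ K *
        ∏ i, (Polynomial.X - Polynomial.C ((n i : ℝ) / ((n i : ℝ) - 1))) ^ (n i - 1) := by
  classical
  set o : Fin K → ℕ := fun i => ∑ k ∈ Finset.univ.filter (fun k => k < i), n k with ho
  have hdisj : ∀ i j : Fin K, i < j → o i + n i ≤ o j := by
    intro i j hij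
    have hsub : insert i (Finset.univ.filter (fun k => k < i))
        ⊆ Finset.univ.filter (fun k => k < j) := by
      intro k hk
      simp only [Finset.mem_insert, Finset.mem_filter, Finset.mem_univ, true_and] at hk ⊢
      rcases hk with rfl | hk
      · exact hij
      · exact lt_trans hk hij
    calc o i + n i = ∑ k ∈ insert i (Finset.univ.filter (fun k => k < i)), n k := by
          rw [Finset.sum_insert (by simp)]; ring
      _ ≤ o j := Finset.sum_le_sum_of_subset hsub
  have hmem : ∀ (m : Fin N) (i : Fin K), β m = i ↔ (o i ≤ m.val ∧ m.val < o i + n i) := by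
    intro m i
    constructor
    · rintro rfl; exact hβ m
    · intro hm
      by_contra hne
      have h2 : o (β m) ≤ m.val ∧ m.val < o (β m) + n (β m) := hβ m
      rcases lt_trichotomy (β m) i with h | h | h
      · have := hdisj _ _ h; omega
      · exact hne h
      · have := hdisj _ _ h; omega
  have hle : ∀ i : Fin K, o i + n i ≤ N := by
    intro i
    calc o i + n i = ∑ k ∈ insert i (Finset.univ.filter (fun k => k < i)), n k := by
          rw [Finset.sum_insert (by simp)]; ring
      _ ≤ ∑ k, n k := Finset.sum_le_sum_of_subset (Finset.subset_univ _)
      _ = N := hN.symm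
  have hcard : ∀ i : Fin K,
      (Finset.univ.filter (fun m : Fin N => β m = i)).card = n i := by
    intro i
    have hc : (Finset.univ.filter (fun m : Fin N => β m = i)).card
        = (Finset.Ico (o i) (o i + n i)).card := by
      apply Finset.card_bij (fun m _ => m.val)
      · intro m hm
        simp only [Finset.mem_filter, Finset.mem_univ, true_and] at hm
        rw [Finset.mem_Ico]
        exact (hmem m i).1 hm
      · intro a _ b _ hab
        exact Fin.val_injective hab
      · intro b hb
        rw [Finset.mem_Ico] at hb
        have hbN : b < N := lt_of_lt_of_le hb.2 (hle i)
        refine ⟨⟨b, hbN⟩, ?_, rfl⟩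
        simp only [Finset.mem_filter, Finset.mem_univ, true_and]
        exact (hmem ⟨b, hbN⟩ i).2 hb
    rw [hc, Nat.card_Ico]
    omega
  have hrow : ∀ m : Fin N, (∑ p, W m p) = ((n (β m) : ℝ) - 1) * w (β m) := by
    intro m
    have hfil : Finset.univ.filter (fun p : Fin N => m ≠ p ∧ β m = β p)
        = (Finset.univ.filter (fun p : Fin N => β p = β m)).erase m := by
      ext p
      simp only [Finset.mem_filter, Finset.mem_univ, true_and, Finset.mem_erase]
      constructor
      · rintro ⟨h1, h2⟩; exact ⟨fun h => h1 h.symm, h2.symm⟩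
      · rintro ⟨h1, h2⟩; exact ⟨fun h => h1 h.symm, h2.symm⟩
    have hcarde : (Finset.univ.filter (fun p : Fin N => m ≠ p ∧ β m = β p)).card
        = n (β m) - 1 := by
      rw [hfil, Finset.card_erase_of_mem (by simp), hcard (β m)]
    calc (∑ p, W m p)
        = ∑ p, (if m ≠ p ∧ β m = β p then w (β m) else 0) := by
          apply Finset.sum_congr rfl; intro p _; exact hW m p
      _ = ∑ p ∈ Finset.univ.filter (fun p : Fin N => m ≠ p ∧ β m = β p), w (β m) := by
          rw [Finset.sum_filter]
      _ = ((n (β m) - 1 : ℕ) : ℝ) * w (β m) := by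
          rw [Finset.sum_const, hcarde, nsmul_eq_mul]
      _ = ((n (β m) : ℝ) - 1) * w (β m) := by
          have := hn (β m); rw [Nat.cast_sub (by omega), Nat.cast_one]
  set d : Fin N → ℝ := fun m => ((n (β m) : ℝ) - 1) * w (β m) with hdd
  have hn1 : ∀ i : Fin K, (n i : ℝ) - 1 ≠ 0 := by
    intro i
    have h2 : (2:ℝ) ≤ (n i : ℝ) := by exact_mod_cast hn i
    linarith
  have hd0 : ∀ m, d m ≠ 0 := by
    intro m
    exact mul_ne_zero (hn1 (β m)) (ne_of_gt (hw (β m)))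
  have hDd : D = Matrix.diagonal d := by
    rw [hD]; exact congrArg Matrix.diagonal (funext hrow)
  have hunit : IsUnit D := by
    rw [hDd, Matrix.isUnit_iff_isUnit_det, Matrix.det_diagonal]
    exact (Finset.prod_ne_zero_iff.2 fun m _ => hd0 m).isUnit
  refine ⟨hunit, ?_⟩
  have hDinv : D⁻¹ = Matrix.diagonal (fun m => (d m)⁻¹) := by
    have hone : Matrix.diagonal d * Matrix.diagonal (fun m => (d m)⁻¹) = 1 := by
      rw [Matrix.diagonal_mul_diagonal]
      have : (fun m => d m * (d m)⁻¹) = fun _ => (1:ℝ) := by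
        funext m; exact mul_inv_cancel₀ (hd0 m)
      rw [this, Matrix.diagonal_one]
    rw [hDd]
    exact Matrix.inv_eq_right_inv hone
  have hM : D⁻¹ * L = Matrix.of (fun m p : Fin N =>
      if β m = β p then (if m = p then (1:ℝ) else -(((n (β m) : ℝ) - 1))⁻¹) else 0) := by
    rw [hL, hDinv, hDd]
    ext m p
    rw [Matrix.diagonal_mul, Matrix.sub_apply, Matrix.diagonal_apply, hW m p, Matrix.of_apply]
    by_cases hmp : m = p
    · subst hmp
      simp [hd0 m]
    · rw [if_neg hmp]
      by_cases hb : β m = β p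
      · rw [if_pos ⟨hmp, hb⟩, if_pos hb, zero_sub, if_neg hmp]
        have hw' : w (β m) ≠ 0 := ne_of_gt (hw (β m))
        show (((n (β m) : ℝ) - 1) * w (β m))⁻¹ * -(w (β m)) = -((n (β m) : ℝ) - 1)⁻¹
        rw [mul_inv]
        field_simp
      · rw [if_neg (fun h : m ≠ p ∧ β m = β p => hb h.2), if_neg hb, sub_zero, mul_zero]
  rw [hM]
  set M : Matrix (Fin N) (Fin N) ℝ := Matrix.of (fun m p : Fin N =>
      if β m = β p then (if m = p then (1:ℝ) else -(((n (β m) : ℝ) - 1))⁻¹) else 0) with hMdef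
  have hBT : M.BlockTriangular β := by
    intro a b hab
    exact if_neg (fun h => absurd hab (by rw [h]; exact lt_irrefl _))
  have hn1' := hn1
  have hblock : ∀ i : Fin K, (M.toSquareBlock β i).charpoly
      = (Polynomial.X - Polynomial.C ((n i : ℝ) / ((n i : ℝ) - 1))) ^ (n i - 1)
          * Polynomial.X := by
    intro i
    have hci : Fintype.card {m : Fin N // β m = i} = n i := by
      rw [Fintype.card_subtype]; exact hcard i
    set s := n i - 1 with hs
    have hns : n i = s + 1 := by have := hn i; omega
    let e : {m : Fin N // β m = i} ≃ Fin (s+1) :=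
      Fintype.equivFinOfCardEq (by rw [hci, hns])
    have h1 : M.toSquareBlock β i = (Matrix.of fun a b : Fin (s+1) =>
        if a = b then (1:ℝ) else -(((n i : ℝ) - 1))⁻¹).reindex e.symm e.symm := by
      ext a b
      rw [Matrix.toSquareBlock_def]
      simp only [Matrix.reindex_apply, Matrix.submatrix_apply, Matrix.of_apply,
        Equiv.symm_symm]
      have hba : β (a : Fin N) = β (b : Fin N) := by rw [a.2, b.2]
      rw [hMdef]
      simp only [Matrix.of_apply]
      rw [if_pos hba, a.2]
      by_cases hab : a = b
      · rw [if_pos (congrArg Subtype.val hab), if_pos (congrArg e hab)]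
      · rw [if_neg (fun h => hab (Subtype.ext h)),
          if_neg (fun h => hab (e.injective h))]
    rw [h1, Matrix.charpoly_reindex]
    have h2 : (Matrix.of fun a b : Fin (s+1) =>
        if a = b then (1:ℝ) else -(((n i : ℝ) - 1))⁻¹).charpoly
        = (Matrix.of fun a b : Fin (s+1) =>
            if a = b then (Polynomial.X - Polynomial.C (1:ℝ))
            else Polynomial.C (((n i : ℝ) - 1)⁻¹)).det := by
      unfold Matrix.charpoly
      congr 1
      ext a b
      by_cases hab : a = b
      · subst hab
        rw [Matrix.charmatrix_apply_eq, Matrix.of_apply, if_pos rfl, Matrix.of_apply, if_pos rfl]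
      · rw [Matrix.charmatrix_apply_ne _ _ _ hab, Matrix.of_apply, if_neg hab,
          Matrix.of_apply, if_neg hab, map_neg, neg_neg]
    rw [h2, aux_det_poly s 1 (((n i : ℝ) - 1)⁻¹)]
    have e1 : (Polynomial.X - Polynomial.C (1:ℝ) - Polynomial.C (((n i : ℝ) - 1)⁻¹))
        = Polynomial.X - Polynomial.C ((n i : ℝ) / ((n i : ℝ) - 1)) := by
      have harith : (1:ℝ) + ((n i : ℝ) - 1)⁻¹ = (n i : ℝ) / ((n i : ℝ) - 1) := by
        rw [eq_div_iff (hn1 i), add_mul, one_mul, inv_mul_cancel₀ (hn1 i)]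
        ring
      rw [sub_sub, ← map_add, harith]
    have e2 : (Polynomial.X - Polynomial.C (1:ℝ)
        + (s : Polynomial ℝ) * Polynomial.C (((n i : ℝ) - 1)⁻¹)) = Polynomial.X := by
      have hsr : ((s : ℕ) : ℝ) = (n i : ℝ) - 1 := by
        have : ((n i : ℕ) : ℝ) = (s : ℝ) + 1 := by exact_mod_cast congrArg Nat.cast hns
        linarith
      rw [← Polynomial.C_eq_natCast, hsr, ← Polynomial.C_mul, mul_inv_cancel₀ (hn1 i),
        Polynomial.C_1]
      ring
    rw [e1, e2]
  have key : (∏ i : Fin K, (M.toSquareBlock β i).charpoly)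
      = Polynomial.X ^ K *
        ∏ i, (Polynomial.X - Polynomial.C ((n i : ℝ) / ((n i : ℝ) - 1))) ^ (n i - 1) := by
    rw [Finset.prod_congr rfl (fun i _ => hblock i), Finset.prod_mul_distrib,
      Finset.prod_const, Finset.card_univ, Fintype.card_fin, mul_comm]
  rw [hBT.charpoly]
  refine Eq.trans (Finset.prod_subset (Finset.subset_univ _) ?_)
    (Eq.trans (Finset.prod_congr rfl fun i _ => ?_) key)
  · intro i _ hi
    exfalso
    have hoi : o i < N := lt_of_lt_of_le (by have := hn i; omega) (hle i)
    have hbm : β ⟨o i, hoi⟩ = i :=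
      (hmem ⟨o i, hoi⟩ i).2 ⟨le_refl _, by show o i < o i + n i; have := hn i; omega⟩
    refine hi ?_
    rw [← hbm]
    convert Finset.mem_image_of_mem β (Finset.mem_univ _)
  · congr!
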